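/- Let m ≥ 1 and let F : ℝ^m → ℝ be such that for each index k, when all variables other than φ_k are fixed, the resulting single-variable function is of the form a + b·cos φ_k + c·sin φ_k (with coefficients a, b, c depending on the other variables). Then the mean of F² over [0,2π]^m equals the average of F² over the Clifford points: (2π)^{−m} ∫_{[0,2π]^m} F(φ)² dφ = 4^{−m} Σ_{φ_c ∈ {0, π/2, π, 3π/2}^m} F(φ_c)². -/

import Mathlib

open MeasureTheory Real Set

lemma one_dim (a b c : ℝ) :
    ∫ t in (0:ℝ)..(2*π), (a + b*Real.cos t + c*Real.sin t)^2
      = 2*π*a^2 + π*b^2 + π*c^2 := by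
  have h : ∀ t : ℝ, (a + b*Real.cos t + c*Real.sin t)^2
      = a^2 + (2*a*b)*Real.cos t + (2*a*c)*Real.sin t + b^2*(Real.cos t)^2
        + c^2*(Real.sin t)^2 + (2*b*c)*(Real.sin t * Real.cos t) := by
    intro t; ring
  simp_rw [h]
  rw [intervalIntegral.integral_add, intervalIntegral.integral_add,
    intervalIntegral.integral_add, intervalIntegral.integral_add,
    intervalIntegral.integral_add,
    intervalIntegral.integral_const, intervalIntegral.integral_const_mul,
    intervalIntegral.integral_const_mul, intervalIntegral.integral_const_mul,
    intervalIntegral.integral_const_mul, intervalIntegral.integral_const_mul,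
    integral_cos, integral_sin, integral_cos_sq, integral_sin_sq,
    integral_sin_mul_cos₁]
  · simp [Real.sin_two_pi, Real.cos_two_pi]; ring
  all_goals exact Continuous.intervalIntegrable (by fun_prop) _ _

lemma sum_four (a b c : ℝ) :
    (π/2) * ∑ j : Fin 4, (a + b*Real.cos (((j:ℕ):ℝ)*(π/2)) + c*Real.sin (((j:ℕ):ℝ)*(π/2)))^2
      = 2*π*a^2 + π*b^2 + π*c^2 := by
  rw [Fin.sum_univ_four]
  have h3 : ((3:ℝ))*(π/2) = π + π/2 := by ring
  have h2 : ((2:ℝ))*(π/2) = π := by ring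
  norm_num [show ((3:Fin 4):ℕ) = 3 from rfl, show ((2:Fin 4):ℕ) = 2 from rfl,
    show ((1:Fin 4):ℕ) = 1 from rfl, show ((0:Fin 4):ℕ) = 0 from rfl,
    h2, h3, Real.cos_add, Real.sin_add]
  ring

lemma pi_restrict (m : ℕ) :
    (volume : Measure (Fin m → ℝ)).restrict (Set.univ.pi fun _ => Set.Icc (0:ℝ) (2*π))
      = Measure.pi (fun _ : Fin m => volume.restrict (Set.Icc (0:ℝ) (2*π))) := by
  refine (Measure.pi_eq (μ := fun _ : Fin m => volume.restrict (Set.Icc (0:ℝ) (2*π)))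
    fun s hs => ?_).symm
  rw [Measure.restrict_apply (MeasurableSet.univ_pi hs), ← Set.pi_inter_distrib, volume_pi,
    Measure.pi_pi]
  congr 1
  ext i
  rw [Measure.restrict_apply (hs i)]

lemma cons_cont (m : ℕ) : Continuous fun p : ℝ × (Fin m → ℝ) =>
    (Fin.cons p.1 p.2 : Fin (m+1) → ℝ) := by
  apply continuous_pi
  intro i
  cases i using Fin.cases with
  | zero => exact continuous_fst
  | succ i =>
      simp only [Fin.cons_succ]
      exact (continuous_apply i).comp continuous_snd

lemma key (m : ℕ) : ∀ (F : (Fin m → ℝ) → ℝ), Continuous F →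
    (∀ (k : Fin m) (φ : Fin m → ℝ), ∃ a b c : ℝ, ∀ t : ℝ,
      F (Function.update φ k t) = a + b * Real.cos t + c * Real.sin t) →
    ∫ φ, (F φ)^2 ∂(Measure.pi fun _ : Fin m => volume.restrict (Set.Icc (0:ℝ) (2*π)))
      = (π/2)^m * ∑ c : Fin m → Fin 4, (F (fun k => ((c k : ℕ) : ℝ) * (π/2)))^2 := by
  induction m with
  | zero =>
      intro F hFc hF
      have hμ : (Measure.pi fun _ : Fin 0 => volume.restrict (Set.Icc (0:ℝ) (2*π))) Set.univ
          = 1 := by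
        rw [Measure.pi_univ]; simp
      rw [show (fun φ : Fin 0 → ℝ => (F φ)^2)
            = fun _ => (F (fun k => (((default : Fin 0 → Fin 4) k : ℕ) : ℝ) * (π/2)))^2 from
          funext fun φ => by rw [Subsingleton.elim φ _],
        integral_const, measureReal_def, hμ]
      rw [Fintype.sum_unique fun c : Fin 0 → Fin 4 =>
        (F (fun k => ((c k : ℕ) : ℝ) * (π/2)))^2]
      simp only [pow_zero, one_mul, ENNReal.toReal_one, one_smul, smul_eq_mul]
      exact congrArg (· ^ 2) (congrArg F (Subsingleton.elim _ _))
  | succ m ih =>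
      intro F hFc hF
      have h0T : (0:ℝ) ≤ 2*π := by positivity
      have hmp := (measurePreserving_piFinSuccAbove
        (fun _ : Fin (m+1) => volume.restrict (Set.Icc (0:ℝ) (2*π))) 0).symm
      rw [← hmp.integral_comp']
      simp only [MeasurableEquiv.piFinSuccAbove_symm_apply, Fin.insertNthEquiv,
        Equiv.coe_fn_mk, Fin.insertNth_zero, cast_eq, Fin.zero_succAbove]
      have hcont : Continuous fun p : ℝ × (Fin m → ℝ) =>
          (F (Fin.cons p.1 p.2))^2 := (hFc.comp (cons_cont m)).pow 2
      have hint : Integrable (fun p : ℝ × (Fin m → ℝ) => (F (Fin.cons p.1 p.2))^2)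
          ((volume.restrict (Set.Icc (0:ℝ) (2*π))).prod
            (Measure.pi fun _ : Fin m => volume.restrict (Set.Icc (0:ℝ) (2*π)))) := by
        rw [← pi_restrict m, Measure.prod_restrict]
        exact hcont.continuousOn.integrableOn_compact
          (isCompact_Icc.prod (isCompact_univ_pi fun _ => isCompact_Icc))
      rw [MeasureTheory.integral_prod _ hint]
      have inner : ∀ x : ℝ,
          (∫ y, (F (Fin.cons x y))^2
            ∂(Measure.pi fun _ : Fin m => volume.restrict (Set.Icc (0:ℝ) (2*π))))
          = (π/2)^m * ∑ c : Fin m → Fin 4,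
              (F (Fin.cons x (fun k => ((c k : ℕ) : ℝ) * (π/2))))^2 := by
        intro x
        refine ih (fun y => F (Fin.cons x y))
          (hFc.comp ((cons_cont m).comp (Continuous.prodMk_right x))) ?_
        intro k y
        obtain ⟨a, b, c, h⟩ := hF k.succ (Fin.cons x y)
        exact ⟨a, b, c, fun t => by
          show F (Fin.cons x (Function.update y k t)) = _
          rw [Fin.cons_update]; exact h t⟩
      simp_rw [inner]
      rw [integral_const_mul, integral_finset_sum _ (fun c _ =>
        ((((hFc.comp ((cons_cont m).comp
            (continuous_id.prodMk continuous_const))).pow 2) :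
          Continuous fun x : ℝ => (F (Fin.cons x (fun k => ((c k : ℕ) : ℝ) * (π/2))))^2
          ).continuousOn.integrableOn_compact isCompact_Icc))]
      have step : ∀ c : Fin m → Fin 4,
          ∫ x in Set.Icc (0:ℝ) (2*π),
            (F (Fin.cons x (fun k => ((c k : ℕ) : ℝ) * (π/2))))^2
          = (π/2) * ∑ j : Fin 4,
            (F (Fin.cons (((j:ℕ):ℝ)*(π/2)) (fun k => ((c k : ℕ) : ℝ) * (π/2)))) ^2 := by
        intro c
        obtain ⟨a, b, c', h⟩ := hF 0 (Fin.cons 0 (fun k => ((c k : ℕ) : ℝ) * (π/2)))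
        have h' : ∀ t : ℝ, F (Fin.cons t (fun k => ((c k : ℕ) : ℝ) * (π/2)))
            = a + b * Real.cos t + c' * Real.sin t := by
          intro t
          rw [← h t, Fin.update_cons_zero]
        simp_rw [h']
        rw [MeasureTheory.integral_Icc_eq_integral_Ioc,
          ← intervalIntegral.integral_of_le h0T, one_dim, ← sum_four]
      simp_rw [step]
      -- reindex the target sum
      rw [← Equiv.sum_comp (Fin.consEquiv fun _ : Fin (m+1) => Fin 4)
        (fun d : Fin (m+1) → Fin 4 => (F (fun k => ((d k : ℕ) : ℝ) * (π/2)))^2),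
        Fintype.sum_prod_type]
      have hpt : ∀ (j : Fin 4) (c : Fin m → Fin 4),
          (fun k => (((Fin.consEquiv fun _ : Fin (m+1) => Fin 4) (j, c) k : ℕ) : ℝ) * (π/2))
            = Fin.cons (((j:ℕ):ℝ)*(π/2)) (fun k => ((c k : ℕ) : ℝ) * (π/2)) := by
        intro j c
        funext k
        cases k using Fin.cases <;> simp [Fin.consEquiv]
      simp_rw [hpt]
      rw [← Finset.mul_sum, pow_succ, mul_assoc]
      congr 1
      congr 1
      exact Finset.sum_comm

theorem stmt_17 (m : ℕ) (hm : 1 ≤ m) (F : (Fin m → ℝ) → ℝ) (hFcont : Continuous F)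
    (hF : ∀ (k : Fin m) (φ : Fin m → ℝ), ∃ a b c : ℝ, ∀ t : ℝ,
      F (Function.update φ k t) = a + b * Real.cos t + c * Real.sin t) :
    (1 / (2 * Real.pi) ^ m) *
        ∫ φ in Set.univ.pi (fun _ : Fin m => Set.Icc (0:ℝ) (2 * Real.pi)), (F φ) ^ 2
      = (1 / 4 ^ m) *
        ∑ c : Fin m → Fin 4, (F (fun k => ((c k : ℕ) : ℝ) * (Real.pi / 2))) ^ 2 := by
  have h := key m F hFcont hF
  have hset : (∫ φ in Set.univ.pi (fun _ : Fin m => Set.Icc (0:ℝ) (2 * Real.pi)), (F φ) ^ 2)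
      = ∫ φ, (F φ)^2
          ∂(Measure.pi fun _ : Fin m => volume.restrict (Set.Icc (0:ℝ) (2*Real.pi))) := by
    rw [← pi_restrict m]
  rw [hset, h, ← mul_assoc]
  congr 1
  have e : (Real.pi/2)/(2*Real.pi) = 1/4 := by
    rw [div_div, div_eq_div_iff (by positivity) (by norm_num)]
    ring
  rw [div_mul_eq_mul_div, one_mul, ← div_pow, e, div_pow, one_pow]
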